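/- Let H be a complex Hilbert space and let f, g ∈ H with f ≠ 0 or g ≠ 0. Then for all real numbers a, b: ‖a·f + b·g‖² ≥ ((‖f‖²·‖g‖² − (Re⟨f,g⟩)²)/(‖f‖² + ‖g‖²)) · (a² + b²) ≥ ((Im⟨f,g⟩)²/(‖f‖² + ‖g‖²)) · (a² + b²). -/

import Mathlib

/-- **A two-vector lower bound in Hilbert spaces.** For `f, g` in a complex Hilbert space,
not both zero, and all real `a, b`:
`‖af + bg‖² ≥ ((‖f‖²‖g‖² − (Re⟪f,g⟫)²)/(‖f‖² + ‖g‖²))(a² + b²)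
            ≥ ((Im⟪f,g⟫)²/(‖f‖² + ‖g‖²))(a² + b²)`. -/
theorem norm_smul_add_smul_sq_ge {H : Type*} [NormedAddCommGroup H] [InnerProductSpace ℂ H]
    (f g : H) (hfg : f ≠ 0 ∨ g ≠ 0) (a b : ℝ) :
    ((‖f‖ ^ 2 * ‖g‖ ^ 2 - (Complex.re (inner ℂ f g : ℂ)) ^ 2) / (‖f‖ ^ 2 + ‖g‖ ^ 2)) *
        (a ^ 2 + b ^ 2) ≤ ‖a • f + b • g‖ ^ 2 ∧
      ((Complex.im (inner ℂ f g : ℂ)) ^ 2 / (‖f‖ ^ 2 + ‖g‖ ^ 2)) * (a ^ 2 + b ^ 2) ≤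
        ((‖f‖ ^ 2 * ‖g‖ ^ 2 - (Complex.re (inner ℂ f g : ℂ)) ^ 2) / (‖f‖ ^ 2 + ‖g‖ ^ 2)) *
          (a ^ 2 + b ^ 2) := by
  set R := Complex.re (inner ℂ f g : ℂ) with hR
  set I := Complex.im (inner ℂ f g : ℂ) with hI
  have hpos : 0 < ‖f‖ ^ 2 + ‖g‖ ^ 2 := by
    rcases hfg with h | h
    · have : 0 < ‖f‖ := norm_pos_iff.mpr h
      positivity
    · have : 0 < ‖g‖ := norm_pos_iff.mpr h
      positivity
  have hN : ‖a • f + b • g‖ ^ 2 = a ^ 2 * ‖f‖ ^ 2 + 2 * a * b * R + b ^ 2 * ‖g‖ ^ 2 := by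
    rw [show a • f = (a : ℂ) • f from RCLike.real_smul_eq_coe_smul (K := ℂ) a f,
        show b • g = (b : ℂ) • g from RCLike.real_smul_eq_coe_smul (K := ℂ) b g,
        norm_add_sq (𝕜 := ℂ), inner_smul_left, inner_smul_right, norm_smul, norm_smul]
    simp [mul_pow, sq_abs, Complex.smul_re, hR]
    ring
  have hCS : R ^ 2 + I ^ 2 ≤ ‖f‖ ^ 2 * ‖g‖ ^ 2 := by
    have h1 : ‖(inner ℂ f g : ℂ)‖ ≤ ‖f‖ * ‖g‖ := norm_inner_le_norm f g
    have h2 : R ^ 2 + I ^ 2 = ‖(inner ℂ f g : ℂ)‖ ^ 2 := by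
      rw [hR, hI, Complex.sq_norm, Complex.normSq_apply]
      ring
    nlinarith [norm_nonneg (inner ℂ f g : ℂ), norm_nonneg f, norm_nonneg g]
  constructor
  · rw [hN, div_mul_eq_mul_div, div_le_iff₀ hpos]
    nlinarith [sq_nonneg (a * ‖f‖ ^ 2 + b * R), sq_nonneg (b * ‖g‖ ^ 2 + a * R)]
  · rw [div_mul_eq_mul_div, div_mul_eq_mul_div, div_le_div_iff₀ hpos hpos]
    nlinarith [mul_le_mul_of_nonneg_right hCS (mul_nonneg (by positivity : (0:ℝ) ≤ a^2+b^2) hpos.le), sq_nonneg R, mul_nonneg (mul_nonneg (sq_nonneg R) (by positivity : (0:ℝ) ≤ a^2+b^2)) hpos.le]
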